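/- Under hypotheses H1–H2, let (S̄, V̄₁, Ī₁) be a single-strain-1 equilibrium (S̄, V̄₁, Ī₁ > 0 with Λ − F₁(S̄, Ī₁) − λS̄ = 0, rS̄ − μV̄₁ = 0, F₁(S̄, Ī₁) − α₁Ī₁ = 0) and set R̄₂ = ((∂F₂/∂I)(S̄, 0) + kV̄₁)/α₂. If R̄₂ < 1, then every complex eigenvalue of the Jacobian matrix of system (3) at E₁ = (S̄, V̄₁, Ī₁, 0) has negative real part; if R̄₂ > 1, then α₂(R̄₂ − 1) is a positive real eigenvalue of this Jacobian. -/

import Mathlib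

set_option maxHeartbeats 1000000

lemma charpoly_eval' {R : Type*} [CommRing R] (M : Matrix (Fin 4) (Fin 4) R) (x : R) :
    M.charpoly.eval x = (Matrix.scalar (Fin 4) x - M).det := by
  rw [Matrix.charpoly, eval_det, Matrix.matPolyEquiv_charmatrix]
  simp

lemma quad_root_re_neg (T D : ℝ) (hT : 0 < T) (hD : 0 < D) (z : ℂ)
    (h : z ^ 2 + (T : ℂ) * z + (D : ℂ) = 0) : z.re < 0 := by
  have hre := congrArg Complex.re h
  have him := congrArg Complex.im h
  simp [pow_two, Complex.mul_re, Complex.mul_im, Complex.add_re, Complex.add_im] at hre him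
  by_cases hy : z.im = 0
  · rw [hy] at hre
    nlinarith [hre]
  · have h2 : z.im * (2 * z.re + T) = 0 := by nlinarith [him]
    have := (mul_eq_zero.1 h2).resolve_left hy
    linarith

lemma scalar_sub_ex {R : Type*} [CommRing R] (x a b c d e f g h i j k l m n o q : R) :
    Matrix.scalar (Fin 4) x - !![a,b,c,d; e,f,g,h; i,j,k,l; m,n,o,q]
    = !![x-a,-b,-c,-d; -e,x-f,-g,-h; -i,-j,x-k,-l; -m,-n,-o,x-q] := by
  ext i' j'
  fin_cases i' <;> fin_cases j' <;>
    simp [Matrix.scalar_apply, Matrix.diagonal_apply]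

lemma map_ex {R S : Type*} [CommRing R] [CommRing S] (φ : R → S)
    (a b c d e f g h i j k l m n o q : R) :
    (!![a,b,c,d; e,f,g,h; i,j,k,l; m,n,o,q]).map φ
    = !![φ a,φ b,φ c,φ d; φ e,φ f,φ g,φ h; φ i,φ j,φ k,φ l; φ m,φ n,φ o,φ q] := by
  ext i' j'
  fin_cases i' <;> fin_cases j' <;> simp

lemma det_ex {R : Type*} [CommRing R] (a b c d e f g h i j k l m n o q : R) :
    (!![a,b,c,d; e,f,g,h; i,j,k,l; m,n,o,q] : Matrix (Fin 4) (Fin 4) R).det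
    = a*(f*(k*q-l*o) - g*(j*q-l*n) + h*(j*o-k*n))
      - b*(e*(k*q-l*o) - g*(i*q-l*m) + h*(i*o-k*m))
      + c*(e*(j*q-l*n) - f*(i*q-l*m) + h*(i*n-j*m))
      - d*(e*(j*o-k*n) - f*(i*o-k*m) + g*(i*n-j*m)) := by
  simp [Matrix.det_succ_row_zero, Fin.sum_univ_succ,
    (by decide : Fin.succAbove (1:Fin 4) (2:Fin 3) = 3),
    (by decide : Fin.succAbove (2:Fin 4) (2:Fin 3) = 3),
    (by decide : Fin.castSucc (2:Fin 3) = (2:Fin 4)),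
    (by decide : Fin.succAbove (3:Fin 4) (2:Fin 3) = 2)]
  ring


/-- Theorem 5.2: local stability of the single-strain-1 boundary equilibrium
E₁ = (S̄, V̄₁, Ī₁, 0) in terms of R̄₂ = (∂F₂/∂I(S̄,0) + kV̄₁)/α₂. -/
theorem jacobian_at_E1
    (Λ r μ k α₁ α₂ lam : ℝ)
    (hΛ : 0 < Λ) (hr : 0 < r) (hμ : 0 < μ) (hk : 0 < k)
    (hα₁ : μ < α₁) (hα₂ : μ < α₂) (hlam : lam = r + μ)
    (F₁ F₂ f₁ f₂ F₁S F₁I F₂S F₂I f₁S f₁I f₂S f₂I : ℝ → ℝ → ℝ)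
    (hF₁nn : ∀ S I : ℝ, 0 ≤ S → 0 ≤ I → 0 ≤ F₁ S I)
    (hF₂nn : ∀ S I : ℝ, 0 ≤ S → 0 ≤ I → 0 ≤ F₂ S I)
    (hF₁C1 : ContDiffOn ℝ 1 (fun p : ℝ × ℝ => F₁ p.1 p.2) {p : ℝ × ℝ | 0 ≤ p.1 ∧ 0 ≤ p.2})
    (hF₂C1 : ContDiffOn ℝ 1 (fun p : ℝ × ℝ => F₂ p.1 p.2) {p : ℝ × ℝ | 0 ≤ p.1 ∧ 0 ≤ p.2})
    (hf₁C1 : ContDiffOn ℝ 1 (fun p : ℝ × ℝ => f₁ p.1 p.2) {p : ℝ × ℝ | 0 ≤ p.1 ∧ 0 ≤ p.2})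
    (hf₂C1 : ContDiffOn ℝ 1 (fun p : ℝ × ℝ => f₂ p.1 p.2) {p : ℝ × ℝ | 0 ≤ p.1 ∧ 0 ≤ p.2})
    (hH1₁ : ∀ S I : ℝ, F₁ S I = I * f₁ S I)
    (hH1₂ : ∀ S I : ℝ, F₂ S I = I * f₂ S I)
    (hF₁zero : ∀ S I : ℝ, 0 ≤ S → 0 ≤ I → F₁ 0 I = 0 ∧ F₁ S 0 = 0)
    (hF₂zero : ∀ S I : ℝ, 0 ≤ S → 0 ≤ I → F₂ 0 I = 0 ∧ F₂ S 0 = 0)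
    (hdF₁S : ∀ S I : ℝ, 0 ≤ S → 0 ≤ I → HasDerivAt (fun x => F₁ x I) (F₁S S I) S)
    (hdF₁I : ∀ S I : ℝ, 0 ≤ S → 0 ≤ I → HasDerivAt (fun y => F₁ S y) (F₁I S I) I)
    (hdF₂S : ∀ S I : ℝ, 0 ≤ S → 0 ≤ I → HasDerivAt (fun x => F₂ x I) (F₂S S I) S)
    (hdF₂I : ∀ S I : ℝ, 0 ≤ S → 0 ≤ I → HasDerivAt (fun y => F₂ S y) (F₂I S I) I)
    (hdf₁S : ∀ S I : ℝ, 0 ≤ S → 0 ≤ I → HasDerivAt (fun x => f₁ x I) (f₁S S I) S)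
    (hdf₁I : ∀ S I : ℝ, 0 ≤ S → 0 ≤ I → HasDerivAt (fun y => f₁ S y) (f₁I S I) I)
    (hdf₂S : ∀ S I : ℝ, 0 ≤ S → 0 ≤ I → HasDerivAt (fun x => f₂ x I) (f₂S S I) S)
    (hdf₂I : ∀ S I : ℝ, 0 ≤ S → 0 ≤ I → HasDerivAt (fun y => f₂ S y) (f₂I S I) I)
    (hH2f₁S : ∀ S I : ℝ, 0 ≤ S → 0 ≤ I → 0 < f₁S S I)
    (hH2f₁I : ∀ S I : ℝ, 0 ≤ S → 0 ≤ I → f₁I S I ≤ 0)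
    (hH2f₂S : ∀ S I : ℝ, 0 ≤ S → 0 ≤ I → 0 < f₂S S I)
    (hH2f₂I : ∀ S I : ℝ, 0 ≤ S → 0 ≤ I → f₂I S I ≤ 0)
    (Sb Vb Ib : ℝ) (hSb : 0 < Sb) (hVb : 0 < Vb) (hIb : 0 < Ib)
    (heq1 : Λ - F₁ Sb Ib - lam * Sb = 0)
    (heq2 : r * Sb - μ * Vb = 0)
    (heq3 : F₁ Sb Ib - α₁ * Ib = 0)
    (Rb₂ : ℝ) (hRb₂ : Rb₂ = (F₂I Sb 0 + k * Vb) / α₂)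
    (J : Matrix (Fin 4) (Fin 4) ℝ)
    (hJ : J = !![-(F₁S Sb Ib) - F₂S Sb 0 - lam, 0, -(F₁I Sb Ib), -(F₂I Sb 0);
                 r, -μ - k * 0, 0, -(k * Vb);
                 F₁S Sb Ib, 0, F₁I Sb Ib - α₁, 0;
                 F₂S Sb 0, k * 0, 0, F₂I Sb 0 + k * Vb - α₂]) :
    (Rb₂ < 1 →
      ∀ z : ℂ, ((J.map (fun x : ℝ => (x : ℂ))).charpoly).IsRoot z → z.re < 0) ∧
    (1 < Rb₂ → 0 < α₂ * (Rb₂ - 1) ∧ J.charpoly.IsRoot (α₂ * (Rb₂ - 1))) := by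

  have hα₂0 : (0:ℝ) < α₂ := hμ.trans hα₂
  -- F₂S at (Sb, 0) vanishes
  have hF2S0 : F₂S Sb 0 = 0 := by
    have hev : (fun x : ℝ => F₂ x 0) =ᶠ[nhds Sb] fun _ => (0:ℝ) := by
      filter_upwards [eventually_gt_nhds hSb] with x hx
      exact (hF₂zero x 0 hx.le le_rfl).2
    have hd0 : HasDerivAt (fun x : ℝ => F₂ x 0) 0 Sb :=
      (hasDerivAt_const Sb (0:ℝ)).congr_of_eventuallyEq hev
    exact (hdF₂S Sb 0 hSb.le le_rfl).unique hd0
  -- F₁S at (Sb, Ib)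
  have hF1S : F₁S Sb Ib = Ib * f₁S Sb Ib := by
    have h := (hdf₁S Sb Ib hSb.le hIb.le).const_mul Ib
    have hd : HasDerivAt (fun x : ℝ => F₁ x Ib) (Ib * f₁S Sb Ib) Sb :=
      h.congr_of_eventuallyEq (Filter.Eventually.of_forall fun x => hH1₁ x Ib)
    exact (hdF₁S Sb Ib hSb.le hIb.le).unique hd
  -- f₁ Sb Ib = α₁
  have hf1 : f₁ Sb Ib = α₁ := by
    have h3 : Ib * f₁ Sb Ib = Ib * α₁ := by
      have := heq3
      rw [hH1₁] at this
      linarith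
    exact mul_left_cancel₀ hIb.ne' h3
  -- F₁I at (Sb, Ib)
  have hF1I : F₁I Sb Ib = α₁ + Ib * f₁I Sb Ib := by
    have h := (hasDerivAt_id Ib).mul (hdf₁I Sb Ib hSb.le hIb.le)
    have hd : HasDerivAt (fun y : ℝ => F₁ Sb y) (α₁ + Ib * f₁I Sb Ib) Ib := by
      have hd' : HasDerivAt (fun y : ℝ => F₁ Sb y) (1 * f₁ Sb Ib + Ib * f₁I Sb Ib) Ib :=
        h.congr_of_eventuallyEq (Filter.Eventually.of_forall fun y => hH1₁ Sb y)
      simpa [hf1] using hd'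
    exact (hdF₁I Sb Ib hSb.le hIb.le).unique hd
  have hp : 0 < Ib * f₁S Sb Ib := mul_pos hIb (hH2f₁S Sb Ib hSb.le hIb.le)
  have hu : Ib * f₁I Sb Ib ≤ 0 :=
    mul_nonpos_of_nonneg_of_nonpos hIb.le (hH2f₁I Sb Ib hSb.le hIb.le)
  have hJ' : J = !![-(Ib * f₁S Sb Ib) - 0 - lam, 0, -(α₁ + Ib * f₁I Sb Ib), -(F₂I Sb 0);
                 r, -μ - k * 0, 0, -(k * Vb);
                 Ib * f₁S Sb Ib, 0, α₁ + Ib * f₁I Sb Ib - α₁, 0;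
                 0, k * 0, 0, F₂I Sb 0 + k * Vb - α₂] := by
    rw [hJ, hF2S0, hF1S, hF1I]
  have hRb : F₂I Sb 0 + k * Vb = Rb₂ * α₂ := by
    rw [hRb₂]; field_simp
  have hlam0 : 0 < lam := by rw [hlam]; linarith
  have keyR : ∀ x : ℝ, J.charpoly.eval x =
      (x + μ) * (x - (F₂I Sb 0 + k * Vb - α₂)) *
        ((x + Ib * f₁S Sb Ib + lam) * (x - Ib * f₁I Sb Ib)
          + (α₁ + Ib * f₁I Sb Ib) * (Ib * f₁S Sb Ib)) := by
    intro x
    rw [charpoly_eval', hJ', scalar_sub_ex, det_ex]; ring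
  constructor
  · intro hR z hz
    have h0 : Polynomial.eval z ((J.map (fun x : ℝ => (x : ℂ))).charpoly) = 0 := hz
    have keyC : Polynomial.eval z ((J.map (fun x : ℝ => (x : ℂ))).charpoly) =
        (z + (μ:ℂ)) * (z - ((F₂I Sb 0 : ℝ) + (k:ℝ) * Vb - α₂ : ℝ)) *
          ((z + ((Ib * f₁S Sb Ib : ℝ):ℂ) + (lam:ℂ)) * (z - ((Ib * f₁I Sb Ib : ℝ):ℂ))
            + ((α₁:ℂ) + ((Ib * f₁I Sb Ib : ℝ):ℂ)) * ((Ib * f₁S Sb Ib : ℝ):ℂ)) := by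
      rw [hJ', map_ex, charpoly_eval', scalar_sub_ex, det_ex]
      push_cast
      ring
    rw [keyC] at h0
    have hmlt : F₂I Sb 0 + k * Vb - α₂ < 0 := by nlinarith
    rcases mul_eq_zero.1 h0 with h | hq
    · rcases mul_eq_zero.1 h with h1 | h2
      · have hzv : z = -(μ:ℂ) := by linear_combination h1
        rw [hzv]
        simpa using hμ
      · have hzv : z = (((F₂I Sb 0 + k * Vb - α₂ : ℝ)):ℂ) := by
          push_cast at h2 ⊢
          linear_combination h2
        rw [hzv]
        simpa using hmlt
    · have hq' : z ^ 2 + ((Ib * f₁S Sb Ib + lam - Ib * f₁I Sb Ib : ℝ):ℂ) * z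
          + ((α₁ * (Ib * f₁S Sb Ib) - lam * (Ib * f₁I Sb Ib) : ℝ):ℂ) = 0 := by
        push_cast at hq ⊢
        linear_combination hq
      exact quad_root_re_neg _ _ (by nlinarith) (by nlinarith) z hq'
  · intro hR
    refine ⟨mul_pos hα₂0 (by linarith), ?_⟩
    show Polynomial.eval _ _ = 0
    rw [keyR]
    have hz : α₂ * (Rb₂ - 1) - (F₂I Sb 0 + k * Vb - α₂) = 0 := by
      linear_combination -hRb
    rw [hz]
    ring
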